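/- Let n ≥ 1 be an integer and let u : ℤ/nℤ → ℝ. Define B : ℤ/nℤ → ℝ by B(j) = (u(j)² + u(j)·u(j+1) + u(j+1)²)/3. Then ∑_{j ∈ ℤ/nℤ} u(j)·(B(j) − B(j−1)) = 0. -/

import Mathlib

/-- Skew-symmetry identity for the Sasamoto–Spohn discretization:
with `B(j) = (u(j)² + u(j)u(j+1) + u(j+1)²)/3`, one has `∑_j u(j)(B(j) - B(j-1)) = 0`
on the periodic lattice `ℤ/nℤ`. -/
theorem stmt12 (n : ℕ) [NeZero n] (u : ZMod n → ℝ) :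
    ∑ j : ZMod n, u j *
        ((u j ^ 2 + u j * u (j + 1) + u (j + 1) ^ 2) / 3 -
          (u (j - 1) ^ 2 + u (j - 1) * u j + u j ^ 2) / 3) = 0 := by
  have shift : ∀ f : ZMod n → ℝ, ∑ j : ZMod n, f (j + 1) = ∑ j : ZMod n, f j :=
    fun f => Fintype.sum_equiv (Equiv.addRight (1 : ZMod n)) _ _ (fun j => rfl)
  have h1 : ∑ j : ZMod n, u j *
        ((u j ^ 2 + u j * u (j + 1) + u (j + 1) ^ 2) / 3 -
          (u (j - 1) ^ 2 + u (j - 1) * u j + u j ^ 2) / 3)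
      = ∑ j : ZMod n, (u j ^ 3 / 3 - u (j + 1) ^ 3 / 3) := by
    have h2 : ∑ j : ZMod n, u (j + 1) *
          ((u j ^ 2 + u j * u (j + 1) + u (j + 1) ^ 2) / 3)
        = ∑ j : ZMod n, u j *
          ((u (j - 1) ^ 2 + u (j - 1) * u j + u j ^ 2) / 3) := by
      rw [← shift (fun j => u j * ((u (j - 1) ^ 2 + u (j - 1) * u j + u j ^ 2) / 3))]
      simp
    calc ∑ j : ZMod n, u j *
          ((u j ^ 2 + u j * u (j + 1) + u (j + 1) ^ 2) / 3 -
            (u (j - 1) ^ 2 + u (j - 1) * u j + u j ^ 2) / 3)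
        = ∑ j : ZMod n, (u j * ((u j ^ 2 + u j * u (j + 1) + u (j + 1) ^ 2) / 3)
            - u j * ((u (j - 1) ^ 2 + u (j - 1) * u j + u j ^ 2) / 3)) :=
          Finset.sum_congr rfl (fun j _ => by ring)
      _ = (∑ j : ZMod n, u j * ((u j ^ 2 + u j * u (j + 1) + u (j + 1) ^ 2) / 3))
            - ∑ j : ZMod n, u j * ((u (j - 1) ^ 2 + u (j - 1) * u j + u j ^ 2) / 3) :=
          Finset.sum_sub_distrib _ _
      _ = (∑ j : ZMod n, u j * ((u j ^ 2 + u j * u (j + 1) + u (j + 1) ^ 2) / 3))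
            - ∑ j : ZMod n, u (j + 1) * ((u j ^ 2 + u j * u (j + 1) + u (j + 1) ^ 2) / 3) := by
          rw [h2]
      _ = ∑ j : ZMod n, (u j * ((u j ^ 2 + u j * u (j + 1) + u (j + 1) ^ 2) / 3)
            - u (j + 1) * ((u j ^ 2 + u j * u (j + 1) + u (j + 1) ^ 2) / 3)) :=
          (Finset.sum_sub_distrib _ _).symm
      _ = ∑ j : ZMod n, (u j ^ 3 / 3 - u (j + 1) ^ 3 / 3) :=
          Finset.sum_congr rfl (fun j _ => by ring)
  rw [h1, Finset.sum_sub_distrib, shift (fun j => u j ^ 3 / 3), sub_self]
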